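/- For every finite simple graph G and every natural number k, there exists a connected finite simple graph H with Aut(H) isomorphic to Aut(G) and clique number ω(H) ≥ k. -/

import Mathlib

open SimpleGraph

/-- Matching-plus-clique extension: old vertices `Sum.inl v`, new clique vertices `Sum.inr v`,
with `Sum.inr v` the matching partner of `Sum.inl v`. -/
def ext {V : Type*} (G : SimpleGraph V) : SimpleGraph (V ⊕ V) where
  Adj x y :=
    match x, y with
    | Sum.inl a, Sum.inl b => G.Adj a b
    | Sum.inr a, Sum.inr b => a ≠ b
    | Sum.inl a, Sum.inr b => a = b
    | Sum.inr a, Sum.inl b => a = b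
  symm := by
    constructor
    rintro (a | a) (b | b) h <;> simp_all
    · exact h.symm
    · exact fun e => h e.symm
  loopless := by
    constructor
    rintro (a | a) h <;> simp_all

instance {V : Type*} (G : SimpleGraph V) [DecidableEq V] [DecidableRel G.Adj] :
    DecidableRel (ext G).Adj
  | Sum.inl a, Sum.inl b => inferInstanceAs (Decidable (G.Adj a b))
  | Sum.inl a, Sum.inr b => inferInstanceAs (Decidable (a = b))
  | Sum.inr a, Sum.inl b => inferInstanceAs (Decidable (a = b))
  | Sum.inr a, Sum.inr b => inferInstanceAs (Decidable (a ≠ b))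

instance {V : Type*} (G : SimpleGraph V) : Group (G ≃g G) where
  mul a b := b.trans a
  one := SimpleGraph.Iso.refl
  inv := SimpleGraph.Iso.symm
  mul_assoc a b c := rfl
  one_mul a := rfl
  mul_one a := rfl
  inv_mul_cancel a := by
    have : a.trans a.symm = SimpleGraph.Iso.refl := by
      ext v
      exact a.toEquiv.symm_apply_apply v
    exact this

section Rigid

def rigidAdj (a b : Fin 6) : Bool :=
  decide ((a,b) ∈ [((0:Fin 6),(1:Fin 6)),(0,2),(0,3),(1,2),(1,4),(3,5)]) ||
  decide ((b,a) ∈ [((0:Fin 6),(1:Fin 6)),(0,2),(0,3),(1,2),(1,4),(3,5)])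

def rigid : SimpleGraph (Fin 6) where
  Adj a b := rigidAdj a b = true
  symm := by constructor; intro a b; revert a b; decide
  loopless := by constructor; intro a; revert a; decide

instance : DecidableRel rigid.Adj := fun a b => by
  unfold rigid; simp only []; infer_instance

set_option maxRecDepth 10000 in
lemma rigid_key : ∀ σ : Equiv.Perm (Fin 6),
    (∀ a b, rigid.Adj (σ a) (σ b) ↔ rigid.Adj a b) → ∀ x, σ x = x := by decide

instance : Subsingleton (rigid ≃g rigid) := by
  constructor
  intro φ ψ
  have e1 : ∀ x, φ x = x := rigid_key φ.toEquiv (fun a b => φ.map_adj_iff)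
  have e2 : ∀ x, ψ x = x := rigid_key ψ.toEquiv (fun a b => ψ.map_adj_iff)
  ext x
  rw [e1 x, e2 x]

lemma rigid_noncomplete : ∃ a b : Fin 6, a ≠ b ∧ ¬ rigid.Adj a b :=
  ⟨4, 5, by decide, by decide⟩

end Rigid

noncomputable local instance (priority := low) {α : Type*} : DecidableEq α := fun a b => Classical.propDecidable _

section Ext
variable {V : Type} (G : SimpleGraph V)

@[simp] lemma ext_adj_ll (a b : V) : (ext G).Adj (.inl a) (.inl b) ↔ G.Adj a b := Iff.rfl
@[simp] lemma ext_adj_lr (a b : V) : (ext G).Adj (.inl a) (.inr b) ↔ a = b := Iff.rfl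
@[simp] lemma ext_adj_rl (a b : V) : (ext G).Adj (.inr a) (.inl b) ↔ a = b := Iff.rfl
@[simp] lemma ext_adj_rr (a b : V) : (ext G).Adj (.inr a) (.inr b) ↔ a ≠ b := Iff.rfl

lemma ext_connected [Nonempty V] : (ext G).Connected := by
  rw [connected_iff]
  refine ⟨?_, inferInstance⟩
  have base : ∀ v : V, (ext G).Reachable (Sum.inr v) (Sum.inr (Classical.arbitrary V)) := by
    intro v
    by_cases h : v = Classical.arbitrary V
    · rw [h]
    · exact SimpleGraph.Adj.reachable (by simpa using h)
  have key : ∀ x : V ⊕ V, (ext G).Reachable x (Sum.inr (Classical.arbitrary V)) := by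
    rintro (v | v)
    · exact (SimpleGraph.Adj.reachable (show (ext G).Adj (.inl v) (.inr v) by simp)).trans (base v)
    · exact base v
  intro x y
  exact (key x).trans (key y).symm

variable [Fintype V]

lemma ext_nclique_inr : (ext G).IsNClique (Fintype.card V) (Finset.univ.image Sum.inr) := by
  constructor
  · intro x hx y hy hxy
    simp only [Finset.coe_image, Set.mem_image] at hx hy
    obtain ⟨a, -, rfl⟩ := hx
    obtain ⟨b, -, rfl⟩ := hy
    simp only [ext_adj_rr, ne_eq]
    exact fun h => hxy (by rw [h])
  · rw [Finset.card_image_of_injective _ Sum.inr_injective, Finset.card_univ]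

lemma no_inl_in_big_clique (h3 : 3 ≤ Fintype.card V) (hnc : ∃ a b, a ≠ b ∧ ¬ G.Adj a b)
    {S : Finset (V ⊕ V)} (hS : (ext G).IsNClique (Fintype.card V) S) {w : V}
    (hw : Sum.inl w ∈ S) : False := by
  by_cases hr : ∃ u, Sum.inr u ∈ S
  · obtain ⟨u, hu⟩ := hr
    have hsub : S ⊆ {Sum.inl u, Sum.inr u} := by
      intro y hy
      have hwu : w = u := hS.1 hw hu (by simp)
      rcases y with a | b
      · have : a = u := hS.1 hy hu (by simp)
        simp [this]
      · by_cases hb : b = u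
        · simp [hb]
        · have : b = w := hS.1 hy hw (by simp)
          exact absurd (this.trans hwu) hb
    have hle := Finset.card_le_card hsub
    have h2 : ({Sum.inl u, Sum.inr u} : Finset (V ⊕ V)).card ≤ 2 :=
      (Finset.card_insert_le _ _).trans (by simp)
    rw [hS.2] at hle
    omega
  · push_neg at hr
    have hall : ∀ y ∈ S, ∃ a, y = Sum.inl a := by
      rintro (a | b) hy
      · exact ⟨a, rfl⟩
      · exact absurd hy (hr b)
    set T := S.image (Sum.elim id id) with hT
    have hinj : Set.InjOn (Sum.elim id id) (S : Set (V ⊕ V)) := by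
      intro y1 h1 y2 h2 he
      obtain ⟨a1, rfl⟩ := hall y1 h1
      obtain ⟨a2, rfl⟩ := hall y2 h2
      simpa using he
    have hcard : T.card = Fintype.card V := by
      rw [hT, Finset.card_image_of_injOn hinj, hS.2]
    have huniv : T = Finset.univ := Finset.eq_univ_of_card T hcard
    obtain ⟨a, b, hab, hnadj⟩ := hnc
    have haT : a ∈ T := huniv ▸ Finset.mem_univ a
    have hbT : b ∈ T := huniv ▸ Finset.mem_univ b
    have hmemS : ∀ c : V, c ∈ T → Sum.inl c ∈ S := by
      intro c hc
      rw [hT, Finset.mem_image] at hc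
      obtain ⟨y, hyS, hy⟩ := hc
      obtain ⟨d, rfl⟩ := hall y hyS
      simpa [← hy] using hyS
    have := hS.1 (hmemS a haT) (hmemS b hbT) (by simp [hab])
    exact hnadj this

lemma clique_image (φ : ext G ≃g ext G) {n : ℕ} {S : Finset (V ⊕ V)}
    (hS : (ext G).IsNClique n S) : (ext G).IsNClique n (S.image φ) := by
  constructor
  · intro x hx y hy hxy
    simp only [Finset.coe_image, Set.mem_image] at hx hy
    obtain ⟨a, ha, rfl⟩ := hx
    obtain ⟨b, hb, rfl⟩ := hy
    exact φ.map_adj_iff.mpr (hS.1 ha hb (fun h => hxy (by rw [h])))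
  · rw [Finset.card_image_of_injective _ φ.injective, hS.2]

variable {G}

lemma iso_inr (h3 : 3 ≤ Fintype.card V) (hnc : ∃ a b, a ≠ b ∧ ¬ G.Adj a b)
    (φ : ext G ≃g ext G) (v : V) : ∃ w, φ (Sum.inr v) = Sum.inr w := by
  have him := clique_image G φ (ext_nclique_inr G)
  have hmem : φ (Sum.inr v) ∈ (Finset.univ.image Sum.inr).image φ :=
    Finset.mem_image_of_mem _ (Finset.mem_image_of_mem _ (Finset.mem_univ v))
  rcases h : φ (Sum.inr v) with a | b
  · rw [h] at hmem
    exact absurd hmem (fun hm => no_inl_in_big_clique G h3 hnc him hm)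
  · exact ⟨b, rfl⟩

lemma iso_inl (h3 : 3 ≤ Fintype.card V) (hnc : ∃ a b, a ≠ b ∧ ¬ G.Adj a b)
    (φ : ext G ≃g ext G) (v : V) : ∃ w, φ (Sum.inl v) = Sum.inl w := by
  rcases h : φ (Sum.inl v) with a | b
  · exact ⟨a, rfl⟩
  · obtain ⟨w, hw⟩ := iso_inr h3 hnc φ.symm b
    have : φ.symm (φ (Sum.inl v)) = Sum.inr w := by rw [h, hw]
    rw [RelIso.symm_apply_apply] at this
    exact absurd this (by simp)

end Ext
section Ext2
variable {V : Type} [Fintype V] (G : SimpleGraph V)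

def extAutFun (σ : G ≃g G) : ext G ≃g ext G where
  toEquiv := Equiv.sumCongr σ.toEquiv σ.toEquiv
  map_rel_iff' := by
    rintro (a | a) (b | b) <;>
      simp [Equiv.sumCongr_apply, σ.map_adj_iff, EmbeddingLike.apply_eq_iff_eq]

def extHom : (G ≃g G) →* (ext G ≃g ext G) where
  toFun := extAutFun G
  map_one' := by ext x; rcases x with a | a <;> rfl
  map_mul' σ τ := by ext x; rcases x with a | a <;> rfl

variable {G}

lemma extHom_injective : Function.Injective (extHom G) := by
  intro σ τ h
  ext v
  have := congrArg (fun (f : ext G ≃g ext G) => f (Sum.inl v)) h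
  simpa [extHom, extAutFun] using this

lemma extHom_surjective (h3 : 3 ≤ Fintype.card V) (hnc : ∃ a b, a ≠ b ∧ ¬ G.Adj a b) :
    Function.Surjective (extHom G) := by
  intro φ
  have hl : ∀ v, φ (Sum.inl v) = Sum.inl (Sum.elim id id (φ (Sum.inl v))) := by
    intro v
    obtain ⟨w, hw⟩ := iso_inl h3 hnc φ v
    rw [hw]; rfl
  have hl' : ∀ v, φ.symm (Sum.inl v) = Sum.inl (Sum.elim id id (φ.symm (Sum.inl v))) := by
    intro v
    obtain ⟨w, hw⟩ := iso_inl h3 hnc φ.symm v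
    rw [hw]; rfl
  set f : V → V := fun v => Sum.elim id id (φ (Sum.inl v)) with hf
  set g : V → V := fun v => Sum.elim id id (φ.symm (Sum.inl v)) with hg
  have hfg : ∀ v, g (f v) = v := by
    intro v
    have : (Sum.inl (g (f v)) : V ⊕ V) = Sum.inl v := by
      rw [hg]
      simp only []
      rw [← hl' (f v), ← hl v, RelIso.symm_apply_apply]
    injection this
  have hgf : ∀ v, f (g v) = v := by
    intro v
    have : (Sum.inl (f (g v)) : V ⊕ V) = Sum.inl v := by
      rw [hf]
      simp only []
      rw [← hl (g v), ← hl' v, RelIso.apply_symm_apply]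
    injection this
  have hmapadj : ∀ a b : V, G.Adj (f a) (f b) ↔ G.Adj a b := by
    intro a b
    have := φ.map_adj_iff (v := Sum.inl a) (w := Sum.inl b)
    rw [hl a, hl b] at this
    exact this
  set σ : G ≃g G :=
    { toFun := f, invFun := g, left_inv := hfg, right_inv := hgf,
      map_rel_iff' := by intro a b; exact hmapadj a b }
  refine ⟨σ, ?_⟩
  ext x
  rcases x with v | v
  · show Sum.inl (f v) = φ (Sum.inl v)
    exact (hl v).symm
  · show Sum.inr (f v) = φ (Sum.inr v)
    obtain ⟨w, hw⟩ := iso_inr h3 hnc φ v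
    have hadj : (ext G).Adj (φ (Sum.inl v)) (φ (Sum.inr v)) := φ.map_adj_iff.mpr (by simp)
    rw [hl v, hw] at hadj
    rw [hw]
    simp only [ext_adj_lr] at hadj
    exact congrArg Sum.inr hadj

noncomputable def extMulEquiv (h3 : 3 ≤ Fintype.card V) (hnc : ∃ a b, a ≠ b ∧ ¬ G.Adj a b) :
    (ext G ≃g ext G) ≃* (G ≃g G) :=
  (MulEquiv.ofBijective (extHom G) ⟨extHom_injective, extHom_surjective h3 hnc⟩).symm

end Ext2
section Star

def starG (V : Type) : SimpleGraph (V ⊕ Unit) where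
  Adj x y :=
    match x, y with
    | Sum.inl _, Sum.inr _ => True
    | Sum.inr _, Sum.inl _ => True
    | _, _ => False
  symm := by constructor; rintro (a | a) (b | b) h <;> trivial
  loopless := by constructor; rintro (a | a) h <;> exact h

variable {V : Type}

@[simp] lemma starG_adj_ll (a b : V) : ¬ (starG V).Adj (.inl a) (.inl b) := fun h => h
@[simp] lemma starG_adj_lr (a : V) (b : Unit) : (starG V).Adj (.inl a) (.inr b) := trivial
@[simp] lemma starG_adj_rl (a : Unit) (b : V) : (starG V).Adj (.inr a) (.inl b) := trivial
@[simp] lemma starG_adj_rr (a b : Unit) : ¬ (starG V).Adj (.inr a) (.inr b) := fun h => h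

def starHom (V : Type) : Equiv.Perm V →* (starG V ≃g starG V) where
  toFun σ :=
    { toEquiv := Equiv.sumCongr σ (Equiv.refl Unit)
      map_rel_iff' := by rintro (a | a) (b | b) <;> simp }
  map_one' := by ext x; rcases x with a | a <;> rfl
  map_mul' σ τ := by ext x; rcases x with a | a <;> rfl

variable [Fintype V]

lemma starG_fixes_center (h2 : 2 ≤ Fintype.card V) (φ : starG V ≃g starG V) :
    φ (Sum.inr ()) = Sum.inr () := by
  rcases h : φ (Sum.inr ()) with a | u
  · exfalso
    obtain ⟨b, c, hbc⟩ := Fintype.exists_pair_of_one_lt_card h2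
    have key : ∀ v : V, φ (Sum.inl v) = Sum.inr () := by
      intro v
      have hadj : (starG V).Adj (φ (Sum.inl v)) (Sum.inl a) := by
        rw [← h]; exact φ.map_adj_iff.mpr (by simp)
      rcases h2 : φ (Sum.inl v) with w | u
      · rw [h2] at hadj; exact absurd hadj (by simp)
      · rfl
    have := φ.injective ((key b).trans (key c).symm)
    simp only [Sum.inl.injEq] at this
    exact hbc this
  · rfl

lemma starG_inl (h2 : 2 ≤ Fintype.card V) (φ : starG V ≃g starG V) (v : V) :
    ∃ w, φ (Sum.inl v) = Sum.inl w := by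
  rcases h : φ (Sum.inl v) with a | u
  · exact ⟨a, rfl⟩
  · exfalso
    have h1 : φ (Sum.inl v) = Sum.inr () := by rw [h]
    have := φ.injective (h1.trans (starG_fixes_center h2 φ).symm)
    simp at this

lemma starHom_bijective (h2 : 2 ≤ Fintype.card V) : Function.Bijective (starHom V) := by
  haveI hne : Nonempty V := Fintype.card_pos_iff.mp (by omega)
  constructor
  · intro σ τ h
    ext v
    have := congrArg (fun (f : starG V ≃g starG V) => f (Sum.inl v)) h
    simpa [starHom] using this
  · intro φ
    have hl : ∀ v, φ (Sum.inl v) = Sum.inl (Sum.elim id (fun _ => Classical.arbitrary V) (φ (Sum.inl v))) := by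
      intro v
      obtain ⟨w, hw⟩ := starG_inl h2 φ v
      rw [hw]; rfl
    have hl' : ∀ v, φ.symm (Sum.inl v) = Sum.inl (Sum.elim id (fun _ => Classical.arbitrary V) (φ.symm (Sum.inl v))) := by
      intro v
      obtain ⟨w, hw⟩ := starG_inl h2 φ.symm v
      rw [hw]; rfl
    set f : V → V := fun v => Sum.elim id (fun _ => Classical.arbitrary V) (φ (Sum.inl v)) with hf
    set g : V → V := fun v => Sum.elim id (fun _ => Classical.arbitrary V) (φ.symm (Sum.inl v)) with hg
    have hfg : ∀ v, g (f v) = v := by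
      intro v
      have : (Sum.inl (g (f v)) : V ⊕ Unit) = Sum.inl v := by
        rw [hg]; simp only []
        rw [← hl' (f v), ← hl v, RelIso.symm_apply_apply]
      injection this
    have hgf : ∀ v, f (g v) = v := by
      intro v
      have : (Sum.inl (f (g v)) : V ⊕ Unit) = Sum.inl v := by
        rw [hf]; simp only []
        rw [← hl (g v), ← hl' v, RelIso.apply_symm_apply]
      injection this
    refine ⟨⟨f, g, hfg, hgf⟩, ?_⟩
    ext x
    rcases x with v | u
    · show Sum.inl (f v) = φ (Sum.inl v)
      exact (hl v).symm
    · show Sum.inr u = φ (Sum.inr u)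
      exact (starG_fixes_center h2 φ).symm

noncomputable def starMulEquivX (h2 : 2 ≤ Fintype.card V) :
    (starG V ≃g starG V) ≃* Equiv.Perm V :=
  (MulEquiv.ofBijective (starHom V) (starHom_bijective h2)).symm

end Star


section Glue

noncomputable def trivialMulEquiv (A B : Type*) [Group A] [Group B] [Subsingleton A]
    [Subsingleton B] : A ≃* B where
  toFun _ := 1
  invFun _ := 1
  left_inv _ := Subsingleton.elim _ _
  right_inv _ := Subsingleton.elim _ _
  map_mul' _ _ := Subsingleton.elim _ _

instance subsingletonAut {V : Type} [Subsingleton V] (G : SimpleGraph V) :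
    Subsingleton (G ≃g G) :=
  ⟨fun a b => by ext x; exact Subsingleton.elim _ _⟩

noncomputable def permMulEquiv {V : Type} (G : SimpleGraph V)
    (h : ∀ (f : V ≃ V) (a b : V), G.Adj (f a) (f b) ↔ G.Adj a b) :
    (G ≃g G) ≃* Equiv.Perm V where
  toFun φ := φ.toEquiv
  invFun σ := ⟨σ, h σ _ _⟩
  left_inv φ := by ext x; rfl
  right_inv σ := rfl
  map_mul' φ ψ := rfl

lemma allAuto_of_complete {V : Type} (G : SimpleGraph V) (h : ∀ a b : V, a ≠ b → G.Adj a b) :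
    ∀ (f : V ≃ V) (a b : V), G.Adj (f a) (f b) ↔ G.Adj a b := by
  have adj_iff : ∀ a b : V, G.Adj a b ↔ a ≠ b := fun a b => ⟨Adj.ne, h a b⟩
  intro f a b
  rw [adj_iff, adj_iff, ne_eq, ne_eq, EmbeddingLike.apply_eq_iff_eq]

lemma allAuto_of_empty {V : Type} (G : SimpleGraph V) (h : ∀ a b : V, ¬ G.Adj a b) :
    ∀ (f : V ≃ V) (a b : V), G.Adj (f a) (f b) ↔ G.Adj a b := by
  intro f a b
  exact iff_of_false (h _ _) (h _ _)

lemma small_graph_cases {V : Type} [Fintype V] (G : SimpleGraph V) (h2 : Fintype.card V ≤ 2) :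
    (∀ a b : V, a ≠ b → G.Adj a b) ∨ (∀ a b : V, ¬ G.Adj a b) := by
  by_cases he : ∃ x y : V, G.Adj x y
  · left
    obtain ⟨x, y, hxy⟩ := he
    have hxyne : x ≠ y := hxy.ne
    intro a b hab
    have htri : ∀ c d e : V, c = d ∨ c = e ∨ d = e := by
      intro c d e
      by_contra hcon
      push_neg at hcon
      have : 3 ≤ Fintype.card V := by
        have : ({c, d, e} : Finset V).card ≤ Fintype.card V := by
          rw [← Finset.card_univ]; exact Finset.card_le_card (Finset.subset_univ _)
        rwa [Finset.card_insert_of_notMem (by simp [hcon.1, hcon.2.1]),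
          Finset.card_insert_of_notMem (by simp [hcon.2.2]), Finset.card_singleton] at this
      omega
    rcases htri a x y with h | h | h
    · -- a = x
      rcases htri b x y with h' | h' | h'
      · exact absurd (h.trans h'.symm) hab
      · rw [h, h']; exact hxy
      · exact absurd h' hxyne
    · -- a = y
      rcases htri b x y with h' | h' | h'
      · rw [h, h']; exact hxy.symm
      · exact absurd (h.trans h'.symm) hab
      · exact absurd h' hxyne
    · exact absurd h hxyne
  · right
    push_neg at he
    exact he

end Glue

section Assembly

lemma ext_noncomplete {W : Type} (H : SimpleGraph W) (h : ∃ a b : W, a ≠ b ∧ ¬ H.Adj a b) :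
    ∃ x y : W ⊕ W, x ≠ y ∧ ¬ (ext H).Adj x y := by
  obtain ⟨a, b, hab, hnadj⟩ := h
  exact ⟨Sum.inl a, Sum.inl b, by simp [hab], by simpa using hnadj⟩

lemma grow {V : Type} [Fintype V] (G : SimpleGraph V) (k : ℕ) :
    ∀ (W : Type) (_ : Fintype W) (H : SimpleGraph W), (∃ a b : W, a ≠ b ∧ ¬ H.Adj a b) →
    3 ≤ Fintype.card W → Nonempty ((H ≃g H) ≃* (G ≃g G)) →
    ∃ (W' : Type) (_ : Fintype W') (H' : SimpleGraph W'),
      (∃ a b : W', a ≠ b ∧ ¬ H'.Adj a b) ∧ 3 + k ≤ Fintype.card W' ∧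
      Nonempty ((H' ≃g H') ≃* (G ≃g G)) := by
  induction k with
  | zero =>
    intro W fW H hnc h3 hmul
    exact ⟨W, fW, H, hnc, by omega, hmul⟩
  | succ k ih =>
    intro W fW H hnc h3 hmul
    obtain ⟨W', fW', H', hnc', h3', hmul'⟩ := ih W fW H hnc h3 hmul
    refine ⟨W' ⊕ W', inferInstance, ext H', ext_noncomplete H' hnc', ?_, ?_⟩
    · rw [Fintype.card_sum]; omega
    · obtain ⟨e⟩ := hmul'
      exact ⟨(extMulEquiv (by omega) hnc').trans e⟩

theorem stmt7_aux {V : Type} [Fintype V] (G : SimpleGraph V) (k : ℕ) :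
    ∃ (W : Type) (_ : Fintype W) (H : SimpleGraph W),
      H.Connected ∧ Nonempty ((H ≃g H) ≃* (G ≃g G)) ∧ k ≤ H.cliqueNum := by
  -- Step 1: find a base graph: noncomplete, ≥ 3 vertices, same automorphism group
  have hbase : ∃ (W : Type) (_ : Fintype W) (H : SimpleGraph W),
      (∃ a b : W, a ≠ b ∧ ¬ H.Adj a b) ∧ 3 ≤ Fintype.card W ∧
      Nonempty ((H ≃g H) ≃* (G ≃g G)) := by
    by_cases hc : ∀ a b : V, a ≠ b → G.Adj a b
    swap
    · push_neg at hc
      obtain ⟨a, b, hab, hnadj⟩ := hc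
      by_cases h3 : 3 ≤ Fintype.card V
      · exact ⟨V, inferInstance, G, ⟨a, b, hab, hnadj⟩, h3, ⟨MulEquiv.refl _⟩⟩
      · -- card ≤ 2 and noncomplete: G is empty
        have h2 : Fintype.card V ≤ 2 := by omega
        have hemp : ∀ x y : V, ¬ G.Adj x y := by
          rcases small_graph_cases G h2 with h | h
          · exact absurd (h a b hab) hnadj
          · exact h
        have hperm : (G ≃g G) ≃* Equiv.Perm V := permMulEquiv G (allAuto_of_empty G hemp)
        have h2' : 2 ≤ Fintype.card V := by
          by_contra hlt
          exact hab (Subsingleton.elim a b (h := Fintype.card_le_one_iff_subsingleton.mp (by omega)))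
        refine ⟨V ⊕ Unit, inferInstance, starG V, ?_, ?_, ⟨(starMulEquivX h2').trans hperm.symm⟩⟩
        · exact ⟨Sum.inl a, Sum.inl b, by simp [hab], by simp⟩
        · rw [Fintype.card_sum]; simp; omega
    · -- G complete
      have hperm : (G ≃g G) ≃* Equiv.Perm V := permMulEquiv G (allAuto_of_complete G hc)
      by_cases h2 : 2 ≤ Fintype.card V
      · obtain ⟨a, b, hab⟩ := Fintype.exists_pair_of_one_lt_card h2
        refine ⟨V ⊕ Unit, inferInstance, starG V, ?_, ?_, ⟨(starMulEquivX h2).trans hperm.symm⟩⟩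
        · exact ⟨Sum.inl a, Sum.inl b, by simp [hab], by simp⟩
        · rw [Fintype.card_sum]; simp; omega
      · -- card ≤ 1: trivial automorphism group
        haveI : Subsingleton V := Fintype.card_le_one_iff_subsingleton.mp (by omega)
        refine ⟨Fin 6, inferInstance, rigid, rigid_noncomplete, by simp, ⟨trivialMulEquiv _ _⟩⟩
  obtain ⟨W, fW, H, hnc, h3, hmul⟩ := hbase
  obtain ⟨W', _, H', hnc', h3', ⟨e⟩⟩ := grow G k W fW H hnc h3 hmul
  haveI : Nonempty W' := Fintype.card_pos_iff.mp (by omega)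
  refine ⟨W' ⊕ W', inferInstance, ext H', ext_connected H', ⟨(extMulEquiv (by omega) hnc').trans e⟩, ?_⟩
  have hcl := ext_nclique_inr H'
  have hle : (Finset.univ.image (Sum.inr : W' → W' ⊕ W')).card ≤ (ext H').cliqueNum :=
    SimpleGraph.IsClique.card_le_cliqueNum (tc := hcl.1)
  rw [hcl.2] at hle
  omega

end Assembly

theorem stmt7 {V : Type} [Fintype V] (G : SimpleGraph V) (k : ℕ) :
    ∃ (W : Type) (_ : Fintype W) (H : SimpleGraph W),
      H.Connected ∧ Nonempty ((H ≃g H) ≃* (G ≃g G)) ∧ k ≤ H.cliqueNum := by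
  exact stmt7_aux G k
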